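/- arXiv:2007.03057 — 9 statements merged into one kernel-verified Lean document; each statement's English description precedes it below -/
import Mathlib

section
/- Let w be a nonnegative symmetric function on pairs of points satisfying the triangle inequality, and for requests i,j with pick-up locations s_i,s_j and drop-off locations t_i,t_j define u_{ij} = min{w(s_i,s_j)+w(s_j,t_i)+w(t_i,t_j), w(s_i,s_j)+w(s_j,t_j)+w(t_j,t_i), w(s_i,t_i)+w(t_i,s_j)+w(s_j,t_j)}. Then u_{ji} ≤ 2·u_{ij}. -/
noncomputable def u {α : Type*} [PseudoMetricSpace α] (si ti sj tj : α) : ℝ :=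
  min (min (dist si sj + dist sj ti + dist ti tj) (dist si sj + dist sj tj + dist tj ti))
    (dist si ti + dist ti sj + dist sj tj)

theorem u_swap_le_two_mul {α : Type*} [PseudoMetricSpace α] (si ti sj tj : α) :
    u sj tj si ti ≤ 2 * u si ti sj tj := by
  unfold u
  rw [mul_min_of_nonneg _ _ (by norm_num : (0:ℝ) ≤ 2),
      mul_min_of_nonneg _ _ (by norm_num : (0:ℝ) ≤ 2)]
  refine le_min (le_min ?_ ?_) ?_
  · -- target 2*A where A = d(si,sj)+d(sj,ti)+d(ti,tj); use B' = d(sj,si)+d(si,ti)+d(ti,tj)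
    refine le_trans (le_trans (min_le_left _ _) (min_le_right _ _)) ?_
    have h1 := dist_triangle si sj ti
    have h2 := dist_comm si sj
    have h3 := dist_comm sj si
    have h4 := dist_nonneg (x := ti) (y := tj)
    have h5 := dist_nonneg (x := sj) (y := ti)
    linarith
  · -- target 2*B where B = d(si,sj)+d(sj,tj)+d(tj,ti); use A' = d(sj,si)+d(si,tj)+d(tj,ti)
    refine le_trans (le_trans (min_le_left _ _) (min_le_left _ _)) ?_
    have h1 := dist_triangle si sj tj
    have h2 := dist_comm sj si
    have h3 := dist_nonneg (x := tj) (y := ti)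
    have h4 := dist_nonneg (x := sj) (y := tj)
    linarith
  · -- target 2*C where C = d(si,ti)+d(ti,sj)+d(sj,tj); use C' = d(sj,tj)+d(tj,si)+d(si,ti)
    refine le_trans (min_le_right _ _) ?_
    have h1 := dist_triangle si ti tj
    have h2 := dist_triangle ti sj tj
    have h3 := dist_comm tj si
    have h4 := dist_nonneg (x := si) (y := ti)
    have h5 := dist_nonneg (x := ti) (y := sj)
    have h6 := dist_nonneg (x := sj) (y := tj)
    linarith
end

section
/- Let w be a pseudometric and for points d_k, s_i, t_i, s_j, t_j define u_{ij} = min{w(s_i,s_j)+w(s_j,t_i)+w(t_i,t_j), w(s_i,s_j)+w(s_j,t_j)+w(t_j,t_i), w(s_i,t_i)+w(t_i,s_j)+w(s_j,t_j)}. Then w(d_k,s_i)+w(s_i,t_i)+w(t_i,d_k)+w(d_k,s_j)+w(s_j,t_j) ≤ 3·(w(d_k,s_i)+u_{ij}). -/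
theorem path_le_three_cost {α : Type*} [PseudoMetricSpace α] (dk si ti sj tj : α) :
    dist dk si + dist si ti + dist ti dk + dist dk sj + dist sj tj
      ≤ 3 * (dist dk si + u si ti sj tj) := by
  have hA : dist si ti ≤ u si ti sj tj := by
    refine le_min (le_min ?_ ?_) ?_
    · nlinarith [dist_triangle si sj ti, dist_triangle_left ti tj tj, dist_nonneg (x := ti) (y := tj)]
    · nlinarith [dist_triangle si sj tj, dist_triangle si tj ti, dist_nonneg (x := si) (y := sj)]
    · nlinarith [dist_nonneg (x := ti) (y := sj), dist_nonneg (x := sj) (y := tj)]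
  have hB : dist si sj + dist sj tj ≤ u si ti sj tj := by
    refine le_min (le_min ?_ ?_) ?_
    · nlinarith [dist_triangle sj ti tj]
    · nlinarith [dist_nonneg (x := tj) (y := ti)]
    · nlinarith [dist_triangle si ti sj]
  have t1 := dist_triangle ti si dk
  have t2 := dist_triangle dk si sj
  have c1 := dist_comm ti si
  have c2 := dist_comm si dk
  linarith
end

section
/- Let w be a pseudometric on points s_i,t_i,s_j,t_j, and define μ_{ij} = min{w(s_i,s_j)+w(s_j,t_i)+(w(s_i,s_j)+w(s_j,t_i)+w(t_i,t_j)), w(s_i,s_j)+w(s_j,t_j)+(w(s_i,s_j)+w(s_j,t_j)+w(t_j,t_i)), w(s_i,t_i)+(w(s_i,t_i)+w(t_i,s_j)+w(s_j,t_j))}, and u_{ij} = min{w(s_i,s_j)+w(s_j,t_i)+w(t_i,t_j), w(s_i,s_j)+w(s_j,t_j)+w(t_j,t_i), w(s_i,t_i)+w(t_i,s_j)+w(s_j,t_j)}. Then (μ_{ij}+μ_{ji})/2 + w(s_i,s_j) ≤ 3·min{u_{ij}, u_{ji}}. -/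
lemma aux_real (a b c d e f : ℝ)
    (h1 : b ≤ a + d) (h2 : c ≤ b + e) (h3 : c ≤ a + f) (h4 : f ≤ d + e)
    (h5 : a ≤ b + d) (h6 : b ≤ c + e) (h7 : d ≤ e + f) (h8 : f ≤ a + c)
    (h9 : a ≤ c + f) (h10 : d ≤ b + a) :
    (min (min (a + d + (a + d + e)) (a + f + (a + f + e))) (b + (b + d + f))
      + min (min (a + c + (a + c + e)) (a + b + (a + b + e))) (f + (f + c + b))) / 2 + a
      ≤ 3 * min (min (min (a + d + e) (a + f + e)) (b + d + f))
          (min (min (a + c + e) (a + b + e)) (f + c + b)) := by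
  have m1 : min (min (a + d + (a + d + e)) (a + f + (a + f + e))) (b + (b + d + f))
      ≤ a + d + (a + d + e) := le_trans (min_le_left _ _) (min_le_left _ _)
  have m2 : min (min (a + d + (a + d + e)) (a + f + (a + f + e))) (b + (b + d + f))
      ≤ a + f + (a + f + e) := le_trans (min_le_left _ _) (min_le_right _ _)
  have m3 : min (min (a + d + (a + d + e)) (a + f + (a + f + e))) (b + (b + d + f))
      ≤ b + (b + d + f) := min_le_right _ _
  have m4 : min (min (a + c + (a + c + e)) (a + b + (a + b + e))) (f + (f + c + b))
      ≤ a + c + (a + c + e) := le_trans (min_le_left _ _) (min_le_left _ _)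
  have m5 : min (min (a + c + (a + c + e)) (a + b + (a + b + e))) (f + (f + c + b))
      ≤ a + b + (a + b + e) := le_trans (min_le_left _ _) (min_le_right _ _)
  have m6 : min (min (a + c + (a + c + e)) (a + b + (a + b + e))) (f + (f + c + b))
      ≤ f + (f + c + b) := min_le_right _ _
  rcases min_cases (min (min (a + d + e) (a + f + e)) (b + d + f))
      (min (min (a + c + e) (a + b + e)) (f + c + b)) with ⟨hU, hc⟩ | ⟨hU, hc⟩ <;> rw [hU] <;>
    [ (rcases min_cases (min (a + d + e) (a + f + e)) (b + d + f) with ⟨hV, hd'⟩ | ⟨hV, hd'⟩ <;>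
        rw [hV]);
      (rcases min_cases (min (a + c + e) (a + b + e)) (f + c + b) with ⟨hV, hd'⟩ | ⟨hV, hd'⟩ <;>
        rw [hV]) ] <;>
    first
    | linarith
    | (rcases min_cases (a + d + e) (a + f + e) with ⟨hW, he'⟩ | ⟨hW, he'⟩ <;> rw [hW] <;> linarith)
    | (rcases min_cases (a + c + e) (a + b + e) with ⟨hW, he'⟩ | ⟨hW, he'⟩ <;> rw [hW] <;> linarith)

noncomputable def mu {α : Type*} [PseudoMetricSpace α] (si ti sj tj : α) : ℝ :=
  min (min (dist si sj + dist sj ti + (dist si sj + dist sj ti + dist ti tj))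
      (dist si sj + dist sj tj + (dist si sj + dist sj tj + dist tj ti)))
    (dist si ti + (dist si ti + dist ti sj + dist sj tj))

theorem mu_avg_add_dist_le_three_min_u {α : Type*} [PseudoMetricSpace α]
    (si ti sj tj : α) :
    (mu si ti sj tj + mu sj tj si ti) / 2 + dist si sj
      ≤ 3 * min (u si ti sj tj) (u sj tj si ti) := by
  have H := aux_real (dist si sj) (dist si ti) (dist si tj) (dist ti sj) (dist ti tj) (dist sj tj)
    (by rw [dist_comm ti sj]; exact dist_triangle si sj ti)
    (dist_triangle si ti tj)
    (dist_triangle si sj tj)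
    (by rw [dist_comm ti sj]; exact dist_triangle sj ti tj)
    (dist_triangle si ti sj)
    (by rw [dist_comm ti tj]; exact dist_triangle si tj ti)
    (by rw [dist_comm sj tj]; exact dist_triangle ti tj sj)
    (by rw [dist_comm si sj]; exact dist_triangle sj si tj)
    (by rw [dist_comm sj tj]; exact dist_triangle si tj sj)
    (by rw [dist_comm si ti]; exact dist_triangle ti si sj)
  simp only [u, mu, dist_comm sj si, dist_comm tj ti, dist_comm tj si, dist_comm sj ti,
    min_assoc] at H ⊢
  convert H using 3 <;> ring
end

section
/- Let w be a pseudometric and d,s_i,s_j points. Then min{w(d,s_i)+w(s_i,s_j), w(d,s_j)+w(s_j,s_i)} ≤ (3/2)·(min{w(d,s_i), w(d,s_j)} + w(s_i,s_j)), i.e., w(s_i,s_j) + (w(d,s_i)+w(d,s_j))/2 ≤ (3/2)·(min{w(d,s_i),w(d,s_j)} + w(s_i,s_j)). -/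
theorem ma_three_halves {α : Type*} [PseudoMetricSpace α] (d si sj : α) :
    min (dist d si + dist si sj) (dist d sj + dist sj si)
        ≤ (3 / 2) * (min (dist d si) (dist d sj) + dist si sj) ∧
      dist si sj + (dist d si + dist d sj) / 2
        ≤ (3 / 2) * (min (dist d si) (dist d sj) + dist si sj) := by
  have h1 := dist_triangle d sj si
  have h2 := dist_triangle d si sj
  have hs : dist sj si = dist si sj := dist_comm sj si
  have n1 : 0 ≤ dist d si := dist_nonneg
  have n2 : 0 ≤ dist d sj := dist_nonneg
  have n3 : 0 ≤ dist si sj := dist_nonneg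
  rcases le_total (dist d si) (dist d sj) with h | h <;>
    rw [min_def, min_def] <;> split_ifs <;>
    constructor <;> linarith
end

section
/- Let w be a pseudometric and d,s_i,s_j points. Then 2·(w(s_i,s_j)+2·min{w(d,s_i),w(d,s_j)}) + 4·min{2w(d,s_i)+w(d,s_j), 2w(d,s_j)+w(d,s_i)} ≤ 8·(2·min{w(d,s_i),w(d,s_j)} + w(s_i,s_j)). -/
theorem ca_eight_fifths {α : Type*} [PseudoMetricSpace α] (d si sj : α) :
    2 * (dist si sj + 2 * min (dist d si) (dist d sj)) +
        4 * min (2 * dist d si + dist d sj) (2 * dist d sj + dist d si)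
      ≤ 8 * (2 * min (dist d si) (dist d sj) + dist si sj) := by
  have h1 : dist d sj ≤ dist d si + dist si sj := by
    have := dist_triangle_right d sj si; simpa [dist_comm] using this
  have h2 : dist d si ≤ dist d sj + dist si sj := by
    have := dist_triangle_right d si sj
    simpa [dist_comm] using this
  rcases le_total (dist d si) (dist d sj) with h | h <;>
  rcases le_total (2 * dist d si + dist d sj) (2 * dist d sj + dist d si) with h' | h' <;>
  simp [min_eq_left, min_eq_right, h, h'] <;> linarith
end

section
/- Let w be a pseudometric and d,s_i,t_i,s_j,t_j points. Then min{2(w(d,s_i)+w(s_i,t_i)) + w(t_i,d)+w(d,s_j)+w(s_j,t_j), 2(w(d,s_j)+w(s_j,t_j)) + w(t_j,d)+w(d,s_i)+w(s_i,t_i)} ≤ 2·max{(w(d,s_i)+w(s_i,t_i)) + (w(d,s_j)+w(s_j,t_j)), w(d,t_i)+w(d,t_j)}. -/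
theorem ta_two_approx_lat {α : Type*} [PseudoMetricSpace α]
    (d si ti sj tj : α) :
    min (2 * (dist d si + dist si ti) + (dist ti d + dist d sj + dist sj tj))
        (2 * (dist d sj + dist sj tj) + (dist tj d + dist d si + dist si ti))
      ≤ 2 * max ((dist d si + dist si ti) + (dist d sj + dist sj tj))
          (dist d ti + dist d tj) := by
  have h1 : dist ti d ≤ dist d si + dist si ti := by
    rw [dist_comm ti d]; exact dist_triangle _ _ _
  have h2 : dist tj d ≤ dist d sj + dist sj tj := by
    rw [dist_comm tj d]; exact dist_triangle _ _ _
  rcases le_total (dist d si + dist si ti) (dist d sj + dist sj tj) with h | h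
  · calc min _ _ ≤ _ := min_le_left _ _
      _ ≤ 2 * ((dist d si + dist si ti) + (dist d sj + dist sj tj)) := by linarith
      _ ≤ 2 * max ((dist d si + dist si ti) + (dist d sj + dist sj tj)) (dist d ti + dist d tj) := by
        have := le_max_left ((dist d si + dist si ti) + (dist d sj + dist sj tj)) (dist d ti + dist d tj)
        linarith
  · calc min _ _ ≤ _ := min_le_right _ _
      _ ≤ 2 * ((dist d si + dist si ti) + (dist d sj + dist sj tj)) := by linarith
      _ ≤ 2 * max ((dist d si + dist si ti) + (dist d sj + dist sj tj)) (dist d ti + dist d tj) := by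
        have := le_max_left ((dist d si + dist si ti) + (dist d sj + dist sj tj)) (dist d ti + dist d tj)
        linarith
end

section
/- Let w be a pseudometric and d,s_i,t_i,s_j,t_j points, and let wait = min over the six feasible orderings (each pick-up before its drop-off) of the sum of the path length from d to the first drop-off plus the path length from d to the second drop-off. Then 2·min{w(d,s_i)+w(s_i,t_i)+w(t_i,d)+w(d,s_j)+w(s_j,t_j), w(d,s_j)+w(s_j,t_j)+w(t_j,d)+w(d,s_i)+w(s_i,t_i)} ≤ 3·wait. -/
noncomputable def waitOpt {α : Type*} [PseudoMetricSpace α] (d si ti sj tj : α) : ℝ :=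
  min (min (min ((dist d si + dist si sj + dist sj ti) +
            (dist d si + dist si sj + dist sj ti + dist ti tj))
          ((dist d si + dist si sj + dist sj tj) +
            (dist d si + dist si sj + dist sj tj + dist tj ti)))
        (min ((dist d si + dist si ti) +
            (dist d si + dist si ti + dist ti sj + dist sj tj))
          ((dist d sj + dist sj si + dist si ti) +
            (dist d sj + dist sj si + dist si ti + dist ti tj))))
    (min ((dist d sj + dist sj si + dist si tj) +
        (dist d sj + dist sj si + dist si tj + dist tj ti))
      ((dist d sj + dist sj tj) +
        (dist d sj + dist sj tj + dist tj si + dist si ti)))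

private lemma aux_min (m x y : ℝ) (hx : 2*m ≤ 3*x) (hy : 2*m ≤ 3*y) :
    2*m ≤ 3*min x y := by
  rcases le_total x y with h | h
  · rw [min_eq_left h]; exact hx
  · rw [min_eq_right h]; exact hy

theorem ta_one_three_approx_lat {α : Type*} [PseudoMetricSpace α]
    (d si ti sj tj : α) :
    2 * min (dist d si + dist si ti + dist ti d + dist d sj + dist sj tj)
        (dist d sj + dist sj tj + dist tj d + dist d si + dist si ti)
      ≤ 3 * waitOpt d si ti sj tj := by
  have h1 := min_le_left (dist d si + dist si ti + dist ti d + dist d sj + dist sj tj)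
      (dist d sj + dist sj tj + dist tj d + dist d si + dist si ti)
  have h2 := min_le_right (dist d si + dist si ti + dist ti d + dist d sj + dist sj tj)
      (dist d sj + dist sj tj + dist tj d + dist d si + dist si ti)
  have c0 : dist si d = dist d si := dist_comm _ _
  have c1 : dist ti d = dist d ti := dist_comm _ _
  have c2 : dist sj d = dist d sj := dist_comm _ _
  have c3 : dist tj d = dist d tj := dist_comm _ _
  have c4 : dist ti si = dist si ti := dist_comm _ _
  have c5 : dist sj si = dist si sj := dist_comm _ _
  have c6 : dist tj si = dist si tj := dist_comm _ _
  have c7 : dist sj ti = dist ti sj := dist_comm _ _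
  have c8 : dist tj ti = dist ti tj := dist_comm _ _
  have c9 : dist tj sj = dist sj tj := dist_comm _ _
  have t0 := dist_triangle d si ti
  have t1 := dist_triangle d si sj
  have t2 := dist_triangle d si tj
  have t3 := dist_triangle d ti si
  have t4 := dist_triangle d ti sj
  have t5 := dist_triangle d ti tj
  have t6 := dist_triangle d sj si
  have t7 := dist_triangle d sj ti
  have t8 := dist_triangle d sj tj
  have t9 := dist_triangle d tj si
  have t10 := dist_triangle d tj ti
  have t11 := dist_triangle d tj sj
  have t12 := dist_triangle si d ti
  have t13 := dist_triangle si d sj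
  have t14 := dist_triangle si d tj
  have t15 := dist_triangle si ti d
  have t16 := dist_triangle si ti sj
  have t17 := dist_triangle si ti tj
  have t18 := dist_triangle si sj d
  have t19 := dist_triangle si sj ti
  have t20 := dist_triangle si sj tj
  have t21 := dist_triangle si tj d
  have t22 := dist_triangle si tj ti
  have t23 := dist_triangle si tj sj
  have t24 := dist_triangle ti d si
  have t25 := dist_triangle ti d sj
  have t26 := dist_triangle ti d tj
  have t27 := dist_triangle ti si d
  have t28 := dist_triangle ti si sj
  have t29 := dist_triangle ti si tj
  have t30 := dist_triangle ti sj d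
  have t31 := dist_triangle ti sj si
  have t32 := dist_triangle ti sj tj
  have t33 := dist_triangle ti tj d
  have t34 := dist_triangle ti tj si
  have t35 := dist_triangle ti tj sj
  have t36 := dist_triangle sj d si
  have t37 := dist_triangle sj d ti
  have t38 := dist_triangle sj d tj
  have t39 := dist_triangle sj si d
  have t40 := dist_triangle sj si ti
  have t41 := dist_triangle sj si tj
  have t42 := dist_triangle sj ti d
  have t43 := dist_triangle sj ti si
  have t44 := dist_triangle sj ti tj
  have t45 := dist_triangle sj tj d
  have t46 := dist_triangle sj tj si
  have t47 := dist_triangle sj tj ti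
  have t48 := dist_triangle tj d si
  have t49 := dist_triangle tj d ti
  have t50 := dist_triangle tj d sj
  have t51 := dist_triangle tj si d
  have t52 := dist_triangle tj si ti
  have t53 := dist_triangle tj si sj
  have t54 := dist_triangle tj ti d
  have t55 := dist_triangle tj ti si
  have t56 := dist_triangle tj ti sj
  have t57 := dist_triangle tj sj d
  have t58 := dist_triangle tj sj si
  have t59 := dist_triangle tj sj ti
  unfold waitOpt
  refine aux_min _ _ _ (aux_min _ _ _ (aux_min _ _ _ ?_ ?_) (aux_min _ _ _ ?_ ?_))
    (aux_min _ _ _ ?_ ?_) <;> linarith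
end

section
/- Let w be a pseudometric and d,s_i,t_i,s_j,t_j points, with u_{ij}, u_{ji} as in the car-sharing problem. Then min{2(w(d,s_i)+w(s_i,t_i))+w(t_i,d)+w(d,s_j)+w(s_j,t_j), 2(w(d,s_j)+w(s_j,t_j))+w(t_j,d)+w(d,s_i)+w(s_i,t_i)} ≤ 4·min{w(d,s_i)+u_{ij}, w(d,s_j)+u_{ji}}. -/
lemma key {α : Type*} [PseudoMetricSpace α] (d si ti sj tj : α) :
    2 * (dist d si + dist si ti) + (dist ti d + dist d sj + dist sj tj)
      ≤ 4 * (dist d si + u si ti sj tj) := by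
  have h1 : dist si ti ≤ dist si sj + dist sj ti := dist_triangle _ _ _
  have h2 : dist ti d ≤ dist ti si + dist si d := dist_triangle _ _ _
  have h3 : dist d sj ≤ dist d si + dist si sj := dist_triangle _ _ _
  have h4 : dist sj tj ≤ dist sj ti + dist ti tj := dist_triangle _ _ _
  have h5 : dist si ti ≤ dist si sj + dist sj tj + dist tj ti := by
    calc dist si ti ≤ dist si sj + dist sj ti := dist_triangle _ _ _
      _ ≤ dist si sj + (dist sj tj + dist tj ti) := by
          linarith [dist_triangle sj tj ti]
      _ = dist si sj + dist sj tj + dist tj ti := by ring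
  have h6 : dist d sj ≤ dist d si + dist si ti + dist ti sj := by
    linarith [dist_triangle d si sj, dist_triangle si ti sj]
  have s1 : dist ti si = dist si ti := dist_comm _ _
  have s2 : dist si d = dist d si := dist_comm _ _
  have s3 : dist tj ti = dist ti tj := dist_comm _ _
  have s4 : dist ti sj = dist sj ti := dist_comm _ _
  have n1 : (0:ℝ) ≤ dist ti tj := dist_nonneg
  have n2 : (0:ℝ) ≤ dist tj ti := dist_nonneg
  have n3 : (0:ℝ) ≤ dist ti sj := dist_nonneg
  have n4 : (0:ℝ) ≤ dist sj tj := dist_nonneg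
  unfold u
  rcases min_cases (min (dist si sj + dist sj ti + dist ti tj)
      (dist si sj + dist sj tj + dist tj ti)) (dist si ti + dist ti sj + dist sj tj) with
    ⟨e, _⟩ | ⟨e, _⟩
  · rw [e]
    rcases min_cases (dist si sj + dist sj ti + dist ti tj)
        (dist si sj + dist sj tj + dist tj ti) with ⟨e2, _⟩ | ⟨e2, _⟩ <;> rw [e2] <;> linarith
  · rw [e]; linarith

theorem ta_two_four_approx_sum {α : Type*} [PseudoMetricSpace α]
    (d si ti sj tj : α) :
    min (2 * (dist d si + dist si ti) + (dist ti d + dist d sj + dist sj tj))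
        (2 * (dist d sj + dist sj tj) + (dist tj d + dist d si + dist si ti))
      ≤ 4 * min (dist d si + u si ti sj tj) (dist d sj + u sj tj si ti) := by
  rcases min_cases (dist d si + u si ti sj tj) (dist d sj + u sj tj si ti) with
    ⟨e, _⟩ | ⟨e, _⟩ <;> rw [e]
  · exact le_trans (min_le_left _ _) (key d si ti sj tj)
  · exact le_trans (min_le_right _ _) (key d sj tj si ti)
end

section
/- Let a ≥ 2 and let c_1 ≤ c_2 ≤ … ≤ c_a and e_1,…,e_a be nonnegative reals with e_j ≤ c_j for all j (where c_j represents w(d,s_j)+w(s_j,t_j) and e_j represents w(d,t_j)). Then Σ_{j=1}^{a} ((a−j+1)·c_j + (a−j)·e_j) ≤ a·Σ_{j=1}^{a} c_j. -/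
theorem ta_a_lat_core (a : ℕ) (ha : 2 ≤ a) (c e : Fin a → ℝ)
    (hc0 : ∀ j, 0 ≤ c j) (he0 : ∀ j, 0 ≤ e j) (hec : ∀ j, e j ≤ c j)
    (hmono : Monotone c) :
    ∑ j : Fin a, (((a : ℝ) - (j : ℕ)) * c j + ((a : ℝ) - (j : ℕ) - 1) * e j)
      ≤ (a : ℝ) * ∑ j : Fin a, c j := by
  set f : Fin a → ℝ := fun j => (a : ℝ) - 2 * (j : ℕ) - 1 with hf
  have hcoef : ∀ j : Fin a, (0 : ℝ) ≤ (a : ℝ) - (j : ℕ) - 1 := by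
    intro j
    have : (j : ℕ) + 1 ≤ a := j.2
    have : ((j : ℕ) : ℝ) + 1 ≤ (a : ℝ) := by exact_mod_cast this
    linarith
  have step1 : ∑ j : Fin a, (((a : ℝ) - (j : ℕ)) * c j + ((a : ℝ) - (j : ℕ) - 1) * e j)
      ≤ ∑ j : Fin a, (((a : ℝ) - (j : ℕ)) * c j + ((a : ℝ) - (j : ℕ) - 1) * c j) := by
    apply Finset.sum_le_sum
    intro j _
    have := mul_le_mul_of_nonneg_left (hec j) (hcoef j)
    linarith
  have hsumf : ∑ j : Fin a, f j = 0 := by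
    simp only [hf]
    rw [Finset.sum_sub_distrib, Finset.sum_sub_distrib]
    have h1 : ∑ j : Fin a, ((j : ℕ) : ℝ) = (∑ j : Fin a, (j : ℕ) : ℕ) := by
      push_cast; ring_nf
    have h2 : ∑ j : Fin a, (j : ℕ) = a * (a - 1) / 2 := by
      rw [Fin.sum_univ_eq_sum_range (fun i => i) a, Finset.sum_range_id]
    simp only [Finset.sum_const, Finset.card_univ, Fintype.card_fin, nsmul_eq_mul,
      ← Finset.mul_sum]
    rw [h1, h2]
    have h3 : (↑(a * (a - 1) / 2) : ℝ) = a * (a - 1) / 2 := by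
      have : 2 ∣ a * (a - 1) := Nat.even_mul_pred_self a |>.two_dvd
      rw [Nat.cast_div this (by norm_num)]
      push_cast [Nat.cast_sub (by omega : 1 ≤ a)]
      ring
    rw [h3]
    have : (1 : ℝ) ≤ a := by exact_mod_cast Nat.one_le_of_lt ha
    push_cast [Nat.cast_sub (by omega : 1 ≤ a)]
    ring
  have hanti : Antivary f c := by
    intro i j hij
    simp only [hf]
    have hji : i ≤ j := by
      by_contra h
      push_neg at h
      exact absurd (hmono h.le) (not_le.mpr hij)
    have : ((i : ℕ) : ℝ) ≤ (j : ℕ) := by exact_mod_cast hji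
    linarith
  have cheb := hanti.card_mul_sum_le_sum_mul_sum
  rw [hsumf, Fintype.card_fin, zero_mul] at cheb
  have ha0 : (0 : ℝ) < a := by positivity
  have hfc : ∑ j : Fin a, f j * c j ≤ 0 := by
    nlinarith [cheb]
  calc ∑ j : Fin a, (((a : ℝ) - (j : ℕ)) * c j + ((a : ℝ) - (j : ℕ) - 1) * e j)
      ≤ ∑ j : Fin a, (((a : ℝ) - (j : ℕ)) * c j + ((a : ℝ) - (j : ℕ) - 1) * c j) := step1
    _ = ∑ j : Fin a, (f j * c j + (a : ℝ) * c j) := by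
        apply Finset.sum_congr rfl; intro j _; simp only [hf]; ring
    _ = (∑ j : Fin a, f j * c j) + (a : ℝ) * ∑ j : Fin a, c j := by
        rw [Finset.sum_add_distrib, Finset.mul_sum]
    _ ≤ (a : ℝ) * ∑ j : Fin a, c j := by linarith
end
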